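/- Let H be a commutative cancellative GCD monoid. Suppose that every element a ∈ H admits a factorization a = s₀·s₁²·s₂^(2²)·⋯·sₙ^(2ⁿ) for some n ≥ 0 and square-free elements s₀,…,sₙ. Then every element a ∈ H admits a factorization a = t₁·t₂²·t₃³·⋯·tₘᵐ for some m ≥ 1 and square-free elements t₁,…,tₘ that are pairwise relatively prime. -/

import Mathlib

section AuxSqfree

variable {H : Type*} [CancelCommMonoid H]

private def GCDhyp (H : Type*) [CancelCommMonoid H] : Prop :=
  ∀ a b : H, ∃ d : H, d ∣ a ∧ d ∣ b ∧ ∀ c : H, c ∣ a → c ∣ b → c ∣ d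

private theorem euclid' (hgcd : GCDhyp H) {a b c : H} (h : IsRelPrime a b) (hd : b ∣ a * c) :
    b ∣ c := by
  obtain ⟨D, h1, h2, h3⟩ := hgcd (c * a) (c * b)
  have hbD : b ∣ D := h3 b (by rwa [mul_comm] at hd) ⟨c, mul_comm c b⟩
  have hcD : c ∣ D := h3 c ⟨a, rfl⟩ ⟨b, rfl⟩
  obtain ⟨e, rfl⟩ := hcD
  have hea : e ∣ a := by
    obtain ⟨f, hf⟩ := h1
    exact ⟨f, mul_left_cancel (show c * a = c * (e * f) by rw [hf, mul_assoc])⟩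
  have heb : e ∣ b := by
    obtain ⟨f, hf⟩ := h2
    exact ⟨f, mul_left_cancel (show c * b = c * (e * f) by rw [hf, mul_assoc])⟩
  have he : IsUnit e := h hea heb
  exact hbD.trans ((he.mul_right_dvd).mpr dvd_rfl)

private theorem mul_dvd' (hgcd : GCDhyp H) {a b x : H} (h : IsRelPrime a b) (ha : a ∣ x)
    (hb : b ∣ x) : a * b ∣ x := by
  obtain ⟨c, rfl⟩ := ha
  obtain ⟨d, rfl⟩ := euclid' hgcd h hb
  exact ⟨d, by rw [mul_assoc]⟩

private theorem relprime_of_dvd' {a b a' b' : H} (h : IsRelPrime a b) (ha : a' ∣ a)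
    (hb : b' ∣ b) : IsRelPrime a' b' := fun _ hca hcb => h (hca.trans ha) (hcb.trans hb)

private theorem relprime_mul' (hgcd : GCDhyp H) {a b c : H} (hac : IsRelPrime a c)
    (hbc : IsRelPrime b c) : IsRelPrime (a * b) c := by
  intro e he1 he2
  obtain ⟨g, hg1, hg2, hg3⟩ := hgcd e a
  have hgu : IsUnit g := hac hg2 (hg1.trans he2)
  have hae : IsRelPrime a e := fun x hxa hxe => isUnit_of_dvd_unit (hg3 x hxe hxa) hgu
  exact hbc (euclid' hgcd hae he1) he2

private theorem relprime_prod' (hgcd : GCDhyp H) {c : H} {m : ℕ} {t : ℕ → H}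
    (h : ∀ i < m, IsRelPrime (t i) c) :
    IsRelPrime (∏ i ∈ Finset.range m, t i) c := by
  induction m with
  | zero => simpa using isRelPrime_one_left
  | succ m ih =>
      rw [Finset.prod_range_succ]
      exact relprime_mul' hgcd (ih fun i hi => h i (by omega)) (h m (by omega))

private theorem prod_dvd' (hgcd : GCDhyp H) {x : H} {m : ℕ} {t : ℕ → H}
    (hrp : ∀ i < m, ∀ j < m, i ≠ j → IsRelPrime (t i) (t j))
    (hdvd : ∀ i < m, t i ∣ x) :
    (∏ i ∈ Finset.range m, t i) ∣ x := by
  induction m with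
  | zero => simpa using one_dvd x
  | succ m ih =>
      rw [Finset.prod_range_succ]
      refine mul_dvd' hgcd ?_ (ih (fun i hi j hj => hrp i (by omega) j (by omega))
        (fun i hi => hdvd i (by omega))) (hdvd m (by omega))
      exact relprime_prod' hgcd fun i hi => hrp i (by omega) m (by omega) (by omega)

private theorem prod_parity {M : Type*} [CommMonoid M] (e : M) (v d : ℕ → M) (m : ℕ) :
    ∏ k ∈ Finset.range (2 * m + 1),
      (if k = 0 then e else if k % 2 = 1 then v ((k - 1) / 2) else d ((k - 2) / 2)) ^ (k + 1)
    = e * ∏ j ∈ Finset.range m, (v j ^ (2 * j + 2) * d j ^ (2 * j + 3)) := by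
  induction m with
  | zero => simp
  | succ m ih =>
      have h1 : 2 * (m + 1) + 1 = (2 * m + 1) + 1 + 1 := by omega
      rw [h1, Finset.prod_range_succ, Finset.prod_range_succ, ih, Finset.prod_range_succ]
      have e1 : (2 * m + 1) % 2 = 1 := by omega
      have e2 : (2 * m + 1 - 1) / 2 = m := by omega
      have e3 : (2 * m + 1 + 1) % 2 = 0 := by omega
      have e4 : (2 * m + 1 + 1 - 2) / 2 = m := by omega
      have e5 : 2 * m + 1 + 1 + 1 = 2 * m + 3 := by omega
      simp only [if_neg (by omega : ¬ (2 * m + 1 = 0)), if_neg (by omega : ¬ (2 * m + 1 + 1 = 0)),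
        e1, e2, e3, e4, e5, if_pos rfl, if_neg (by omega : ¬ (0:ℕ) = 1)]
      have h2 : 2 * m + 1 + 1 = 2 * m + 2 := by omega
      rw [h2, mul_assoc, mul_assoc, if_pos trivial]

private theorem key (hgcd : GCDhyp H) :
    ∀ n : ℕ, ∀ s : ℕ → H, (∀ i < n + 1, Squarefree (s i)) →
      ∃ m : ℕ, 1 ≤ m ∧ ∃ t : ℕ → H,
        (∀ i < m, Squarefree (t i)) ∧
        (∀ i < m, ∀ j < m, i ≠ j → IsRelPrime (t i) (t j)) ∧
        ∏ i ∈ Finset.range (n + 1), s i ^ (2 ^ i) = ∏ i ∈ Finset.range m, t i ^ (i + 1) := by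
  intro n
  induction n with
  | zero =>
      intro s hs
      refine ⟨1, le_refl 1, fun _ => s 0, ?_, ?_, by simp⟩
      · intro i hi; exact hs 0 (by omega)
      · intro i hi j hj hij; omega
  | succ n ih =>
      intro s hs
      obtain ⟨m, hm, u, husf, hurp, hprod⟩ := ih (fun i => s (i + 1)) (fun i hi => hs (i + 1) (by omega))
      -- A = s 0 * B ^ 2
      have hA : ∏ i ∈ Finset.range (n + 1 + 1), s i ^ (2 ^ i)
          = s 0 * (∏ i ∈ Finset.range (n + 1), s (i + 1) ^ (2 ^ i)) ^ 2 := by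
        rw [Finset.prod_range_succ', ← Finset.prod_pow]
        simp only [pow_zero, pow_one]
        rw [mul_comm]
        congr 1
        refine Finset.prod_congr rfl fun i _ => ?_
        rw [← pow_mul, pow_succ]
      have hGCD := fun j => hgcd (s 0) (u j)
      choose d hd1 hd2 hd3 using hGCD
      choose v hv using hd2
      have hdu : ∀ j, d j ∣ u j := fun j => ⟨v j, hv j⟩
      have hvu : ∀ j, v j ∣ u j := fun j => ⟨d j, by rw [hv j, mul_comm]⟩
      have hdrp : ∀ j < m, ∀ k < m, j ≠ k → IsRelPrime (d j) (d k) :=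
        fun j hj k hk hjk => relprime_of_dvd' (hurp j hj k hk hjk) (hdu j) (hdu k)
      obtain ⟨e, he⟩ := prod_dvd' hgcd hdrp (fun j _ => hd1 j)
      have hdP : ∀ j < m, d j ∣ ∏ k ∈ Finset.range m, d k :=
        fun j hj => Finset.dvd_prod_of_mem _ (Finset.mem_range.mpr hj)
      have hes : e ∣ s 0 := ⟨∏ k ∈ Finset.range m, d k, by rw [he, mul_comm]⟩
      have sqs0 : Squarefree (s 0) := hs 0 (by omega)
      have claim_ed : ∀ j < m, IsRelPrime e (d j) := by
        intro j hj c hce hcd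
        refine sqs0 c ?_
        rw [he]
        exact mul_dvd_mul (hcd.trans (hdP j hj)) hce
      have claim_ev : ∀ j < m, IsRelPrime e (v j) := by
        intro j hj c hce hcv
        exact claim_ed j hj hce (hd3 j c (hce.trans hes) (hcv.trans (hvu j)))
      have claim_dv : ∀ j < m, IsRelPrime (d j) (v j) := by
        intro j hj c hcd hcv
        exact husf j hj c (by rw [hv j]; exact mul_dvd_mul hcd hcv)
      refine ⟨2 * m + 1, by omega,
        fun k => if k = 0 then e else if k % 2 = 1 then v ((k - 1) / 2) else d ((k - 2) / 2),
        ?_, ?_, ?_⟩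
      · -- squarefree
        intro k hk
        beta_reduce
        by_cases h0 : k = 0
        · rw [if_pos h0]
          exact sqs0.squarefree_of_dvd hes
        · rw [if_neg h0]
          by_cases h1 : k % 2 = 1
          · rw [if_pos h1]
            exact (husf _ (by omega)).squarefree_of_dvd (hvu _)
          · rw [if_neg h1]
            exact sqs0.squarefree_of_dvd (hd1 _)
      · -- pairwise relatively prime
        intro i hi j hj hij
        beta_reduce
        by_cases h1 : i = 0
        · rw [if_pos h1]
          rw [if_neg (show ¬ j = 0 by omega)]
          by_cases h4 : j % 2 = 1
          · rw [if_pos h4]; exact claim_ev _ (by omega)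
          · rw [if_neg h4]; exact claim_ed _ (by omega)
        · rw [if_neg h1]
          by_cases h2 : j = 0
          · rw [if_pos h2]
            by_cases h3 : i % 2 = 1
            · rw [if_pos h3]; exact (claim_ev _ (by omega)).symm
            · rw [if_neg h3]; exact (claim_ed _ (by omega)).symm
          · rw [if_neg h2]
            by_cases h3 : i % 2 = 1 <;> by_cases h4 : j % 2 = 1
            · rw [if_pos h3, if_pos h4]
              exact relprime_of_dvd' (hurp _ (by omega) _ (by omega) (by omega)) (hvu _) (hvu _)
            · rw [if_pos h3, if_neg h4]
              by_cases heq : (i - 1) / 2 = (j - 2) / 2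
              · rw [heq]; exact (claim_dv _ (by omega)).symm
              · exact relprime_of_dvd' (hurp _ (by omega) _ (by omega) heq) (hvu _) (hdu _)
            · rw [if_neg h3, if_pos h4]
              by_cases heq : (i - 2) / 2 = (j - 1) / 2
              · rw [heq]; exact claim_dv _ (by omega)
              · exact relprime_of_dvd' (hurp _ (by omega) _ (by omega) heq) (hdu _) (hvu _)
            · rw [if_neg h3, if_neg h4]
              exact relprime_of_dvd' (hurp _ (by omega) _ (by omega) (by omega)) (hdu _) (hdu _)
      · -- the product identity
        beta_reduce
        rw [hA, hprod, prod_parity, he]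
        have hsq : (∏ j ∈ Finset.range m, u j ^ (j + 1)) ^ 2
            = (∏ j ∈ Finset.range m, d j ^ (2 * j + 2)) * ∏ j ∈ Finset.range m, v j ^ (2 * j + 2) := by
          rw [← Finset.prod_pow, ← Finset.prod_mul_distrib]
          refine Finset.prod_congr rfl fun j _ => ?_
          have hjj : (j + 1) * 2 = 2 * j + 2 := by ring
          rw [hv j, mul_pow, mul_pow, ← pow_mul, ← pow_mul, hjj]
        rw [hsq]
        have hPd : (∏ k ∈ Finset.range m, d k) * ∏ j ∈ Finset.range m, d j ^ (2 * j + 2)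
            = ∏ j ∈ Finset.range m, d j ^ (2 * j + 3) := by
          rw [← Finset.prod_mul_distrib]
          exact Finset.prod_congr rfl fun j _ => by rw [← pow_succ']
        rw [Finset.prod_mul_distrib, ← hPd]
        ac_rfl

end AuxSqfree

theorem stmt_4 {H : Type*} [CancelCommMonoid H]
    (hgcd : ∀ a b : H, ∃ d : H, d ∣ a ∧ d ∣ b ∧ ∀ c : H, c ∣ a → c ∣ b → c ∣ d)
    (hyp : ∀ a : H, ∃ n : ℕ, ∃ s : Fin (n + 1) → H,
      (∀ i, Squarefree (s i)) ∧ a = ∏ i, (s i) ^ (2 ^ i.val)) :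
    ∀ a : H, ∃ m : ℕ, 1 ≤ m ∧ ∃ t : Fin m → H,
      (∀ i, Squarefree (t i)) ∧ (∀ i j, i ≠ j → IsRelPrime (t i) (t j)) ∧
      a = ∏ i, (t i) ^ (i.val + 1) := by
  intro a
  obtain ⟨n, s, hsf, ha⟩ := hyp a
  set s' : ℕ → H := fun i => if h : i < n + 1 then s ⟨i, h⟩ else 1 with hs'
  have ha' : a = ∏ i ∈ Finset.range (n + 1), s' i ^ (2 ^ i) := by
    rw [ha, ← Fin.prod_univ_eq_prod_range (fun i => s' i ^ 2 ^ i) (n + 1)]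
    refine Finset.prod_congr rfl fun i _ => ?_
    simp [hs', i.isLt, Nat.not_lt.mpr i.is_le]
  have hsf' : ∀ i < n + 1, Squarefree (s' i) := by
    intro i hi
    simp only [hs', dif_pos hi]
    exact hsf _
  obtain ⟨m, hm, t, htsf, htrp, hteq⟩ := key hgcd n s' hsf'
  refine ⟨m, hm, fun i => t i.val, fun i => htsf i.val i.isLt, ?_, ?_⟩
  · intro i j hij
    exact htrp i.val i.isLt j.val j.isLt (fun h => hij (Fin.ext h))
  · rw [ha', hteq, ← Fin.prod_univ_eq_prod_range (fun i => t i ^ (i + 1)) m]
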